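/- Consider a uniform instance with r = W mod Max, 0 < r, and k = ⌈W/Max⌉. Let x be a feasible allocation of maximum profit such that x i ∈ {0, r, Max} for all i and such that every point t : ℝ is contained in at most k of the intervals [s i, e i) with x i > 0. Then, writing λ = r/Max and G1 = {i | x i = r}, it holds that r · |G1| ≤ (λ/(k − 1 + λ)) · (∑ i, x i). -/

import Mathlib

open Finset

/-- A feasible allocation (FBAP solution). -/
def IsAlloc {n : ℕ} (W : ℕ) (s e : Fin n → ℝ) (rmax : Fin n → ℕ)
    (x : Fin n → ℕ) : Prop :=
  (∀ i, x i ≤ rmax i) ∧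
  ∀ t : ℝ, ∑ i ∈ Finset.univ.filter (fun i => s i ≤ t ∧ t < e i), x i ≤ W

/-- Profit of an allocation. -/
def allocProfit {n : ℕ} (p : Fin n → ℝ) (x : Fin n → ℕ) : ℝ :=
  ∑ i, p i * x i

noncomputable section StmtAux14
open scoped Classical

/-- Cost of a reversed walk: `rcost w (v :: u :: t) = w u v + rcost w (u :: t)`.
The head of the list is the endpoint of the walk; arcs go from later
elements to earlier ones. -/
def rcost14 (w : ℕ → ℕ → ℝ) : List ℕ → ℝ
  | [] => 0
  | [_] => 0
  | a :: b :: t => w b a + rcost14 w (b :: t)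

/-- Bellman–Ford table: `BF14 w M K v` = min cost of a reversed walk ending (heading) at
`v` with at most `K` arcs, all intermediate vertices in `insert 0 (range M)`. -/
def BF14 (w : ℕ → ℕ → ℝ) (M : ℕ) : ℕ → ℕ → ℝ
  | 0 => fun _ => 0
  | (K+1) => fun v => min (BF14 w M K v)
      ((insert 0 (Finset.range M)).inf' ⟨0, Finset.mem_insert_self _ _⟩
        (fun u => BF14 w M K u + w u v))

lemma BF14_mono (w : ℕ → ℕ → ℝ) (M K v : ℕ) :
    BF14 w M (K+1) v ≤ BF14 w M K v := min_le_left _ _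

lemma BF14_nonpos (w : ℕ → ℕ → ℝ) (M K v : ℕ) : BF14 w M K v ≤ 0 := by
  induction K with
  | zero => simp [BF14]
  | succ K ih => exact le_trans (BF14_mono w M K v) ih

/-- Any admissible reversed walk upper-bounds the BF value. -/
lemma BF14_le_rcost (w : ℕ → ℕ → ℝ) (M : ℕ) :
    ∀ (K : ℕ) (t : List ℕ) (v : ℕ),
      (∀ u ∈ t, u ∈ insert 0 (Finset.range M)) → t.length ≤ K →
      BF14 w M K v ≤ rcost14 w (v :: t) := by
  intro K
  induction K with
  | zero =>
    intro t v _ hlen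
    have : t = [] := List.length_eq_zero_iff.mp (Nat.le_zero.mp hlen)
    subst this
    simp [BF14, rcost14]
  | succ K ih =>
    intro t v hmem hlen
    cases t with
    | nil =>
      calc BF14 w M (K+1) v ≤ BF14 w M 0 v := by
            clear ih hmem hlen
            induction K with
            | zero => exact BF14_mono w M 0 v
            | succ K ih2 => exact le_trans (BF14_mono w M (K+1) v) ih2
        _ = 0 := by simp [BF14]
        _ = rcost14 w [v] := by simp [rcost14]
    | cons u t' =>
      have hu : u ∈ insert 0 (Finset.range M) := hmem u (by simp)
      have h1 : BF14 w M (K+1) v ≤ BF14 w M K u + w u v := by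
        refine le_trans (min_le_right _ _) ?_
        exact Finset.inf'_le _ hu
      have h2 : BF14 w M K u ≤ rcost14 w (u :: t') :=
        ih t' u (fun z hz => hmem z (by simp [hz])) (by simpa using Nat.succ_le_succ_iff.mp hlen)
      calc BF14 w M (K+1) v ≤ BF14 w M K u + w u v := h1
        _ ≤ rcost14 w (u :: t') + w u v := by linarith
        _ = rcost14 w (v :: u :: t') := by simp [rcost14]; ring

/-- The BF value is attained by some admissible reversed walk. -/
lemma BF14_exists_walk (w : ℕ → ℕ → ℝ) (M : ℕ) :
    ∀ (K : ℕ) (v : ℕ), ∃ t : List ℕ,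
      t.length ≤ K ∧ (∀ u ∈ t, u ∈ insert 0 (Finset.range M)) ∧
      rcost14 w (v :: t) = BF14 w M K v := by
  intro K
  induction K with
  | zero =>
    intro v
    exact ⟨[], by simp, by simp, by simp [BF14, rcost14]⟩
  | succ K ih =>
    intro v
    rcases Finset.exists_mem_eq_inf' (⟨0, Finset.mem_insert_self _ _⟩ :
        (insert 0 (Finset.range M)).Nonempty) (fun u => BF14 w M K u + w u v) with ⟨u0, hu0, hequ⟩
    rcases le_or_gt (BF14 w M K v) (BF14 w M K u0 + w u0 v) with hc | hc
    · rcases ih v with ⟨t, ht1, ht2, ht3⟩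
      refine ⟨t, le_trans ht1 (Nat.le_succ K), ht2, ?_⟩
      rw [ht3]
      show _ = min _ _
      rw [hequ, min_eq_left hc]
    · rcases ih u0 with ⟨t, ht1, ht2, ht3⟩
      refine ⟨u0 :: t, by simpa using ht1, ?_, ?_⟩
      · intro z hz
        rcases List.mem_cons.mp hz with h | h
        · subst h; exact hu0
        · exact ht2 z h
      · show rcost14 w (v :: u0 :: t) = min _ _
        rw [hequ, min_eq_right (le_of_lt hc)]
        simp [rcost14, ht3]; ring


variable (w : ℕ → ℕ → ℝ)

lemma rcost14_split : ∀ (X : List ℕ) (c : ℕ) (Y : List ℕ),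
    rcost14 w (X ++ c :: Y) = rcost14 w (X ++ [c]) + rcost14 w (c :: Y) := by
  intro X
  induction X with
  | nil => intro c Y; simp [rcost14]
  | cons a X' ih =>
    intro c Y
    cases X' with
    | nil => simp [rcost14]
    | cons b X'' =>
      have h := ih c Y
      simp only [List.cons_append] at h
      show w b a + rcost14 w (b :: (X'' ++ c :: Y))
          = (w b a + rcost14 w (b :: (X'' ++ [c]))) + rcost14 w (c :: Y)
      rw [h]; ring

lemma exists_dup_decomp : ∀ (l : List ℕ), ¬ l.Nodup →
    ∃ (c : ℕ) (A B C : List ℕ), l = A ++ c :: B ++ c :: C := by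
  intro l
  induction l with
  | nil => intro h; exact absurd List.nodup_nil h
  | cons a t ih =>
    intro h
    by_cases ha : a ∈ t
    · rcases List.append_of_mem ha with ⟨B, C, rfl⟩
      exact ⟨a, [], B, C, by simp⟩
    · have : ¬ t.Nodup := by
        intro hn; exact h (List.nodup_cons.mpr ⟨ha, hn⟩)
      rcases ih this with ⟨c, A, B, C, rfl⟩
      exact ⟨c, a :: A, B, C, by simp⟩

def ccost14 (w : ℕ → ℕ → ℝ) (p : List ℕ) : ℝ := rcost14 w (p ++ [p.headI])

/-- key additivity: removing a cycle -/
lemma ccost14_decomp (c : ℕ) (A B C : List ℕ) :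
    ccost14 w (A ++ c :: B ++ c :: C) =
      ccost14 w (c :: B) + ccost14 w (A ++ c :: C) := by
  have hcb : ccost14 w (c :: B) = rcost14 w (c :: (B ++ [c])) := by
    show rcost14 w ((c :: B) ++ [c]) = _
    simp
  cases A with
  | nil =>
    have e1 : (([] : List ℕ) ++ c :: B ++ c :: C) ++ [(([] : List ℕ) ++ c :: B ++ c :: C).headI]
        = (c :: B) ++ c :: (C ++ [c]) := by simp
    have e2 : (([] : List ℕ) ++ c :: C) ++ [(([] : List ℕ) ++ c :: C).headI]
        = c :: (C ++ [c]) := by simp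
    show rcost14 w _ = _ + rcost14 w _
    rw [e1, e2, rcost14_split w (c :: B) c (C ++ [c]), hcb]
    have : (c :: B) ++ [c] = c :: (B ++ [c]) := by simp
    rw [this]
  | cons a A' =>
    have e1 : ((a :: A') ++ c :: B ++ c :: C) ++ [((a :: A') ++ c :: B ++ c :: C).headI]
        = (a :: A') ++ c :: ((B ++ c :: (C ++ [a]))) := by simp
    have e2 : ((a :: A') ++ c :: C) ++ [((a :: A') ++ c :: C).headI]
        = (a :: A') ++ c :: (C ++ [a]) := by simp
    show rcost14 w _ = _ + rcost14 w _
    rw [e1, e2, rcost14_split w (a :: A') c (B ++ c :: (C ++ [a]))]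
    have e3 : c :: (B ++ c :: (C ++ [a])) = (c :: B) ++ c :: (C ++ [a]) := by simp
    rw [e3, rcost14_split w (c :: B) c (C ++ [a]),
      rcost14_split w (a :: A') c (C ++ [a]), hcb]
    have : (c :: B) ++ [c] = c :: (B ++ [c]) := by simp
    rw [this]; ring

lemma ccost14_nonneg (M : ℕ)
    (hsimple : ∀ p : List ℕ, p ≠ [] → p.Nodup →
      (∀ u ∈ p, u ∈ insert 0 (Finset.range M)) → 0 ≤ ccost14 w p) :
    ∀ (N : ℕ) (p : List ℕ), p.length ≤ N → p ≠ [] →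
      (∀ u ∈ p, u ∈ insert 0 (Finset.range M)) → 0 ≤ ccost14 w p := by
  intro N
  induction N with
  | zero =>
    intro p hlen hne _
    exact absurd (List.length_eq_zero_iff.mp (Nat.le_zero.mp hlen)) hne
  | succ N ih =>
    intro p hlen hne hmem
    by_cases hnd : p.Nodup
    · exact hsimple p hne hnd hmem
    · rcases exists_dup_decomp p hnd with ⟨c, A, B, C, rfl⟩
      rw [ccost14_decomp]
      have hlenp : A.length + B.length + C.length + 2 ≤ N + 1 := by
        simp only [List.length_append, List.length_cons] at hlen; omega
      have m1 : ∀ u ∈ c :: B, u ∈ insert 0 (Finset.range M) := by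
        intro u hu
        apply hmem
        rcases List.mem_cons.mp hu with h | h
        · subst h; simp
        · simp [h]
      have m2 : ∀ u ∈ A ++ c :: C, u ∈ insert 0 (Finset.range M) := by
        intro u hu
        apply hmem
        rcases List.mem_append.mp hu with h | h
        · simp [h]
        · rcases List.mem_cons.mp h with h' | h'
          · subst h'; simp
          · simp [h']
      have h1 := ih (c :: B) (by simp; omega) (by simp) m1
      have h2 := ih (A ++ c :: C) (by simp; omega) (by simp) m2
      linarith


lemma rcost14_append_sum (w : ℕ → ℕ → ℝ) :
    ∀ (l : List ℕ) (a : ℕ),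
      rcost14 w (l ++ [a]) =
        ∑ j ∈ Finset.range l.length, w ((l ++ [a]).getD (j+1) 0) (l.getD j 0) := by
  intro l
  induction l with
  | nil => intro a; simp [rcost14]
  | cons b l' ih =>
    intro a
    cases l' with
    | nil => simp [rcost14]
    | cons d l'' =>
      have hrec : rcost14 w ((b :: d :: l'') ++ [a])
          = w d b + rcost14 w ((d :: l'') ++ [a]) := by
        simp only [List.cons_append, rcost14, List.append_eq]
      rw [hrec, ih a]
      conv_rhs => rw [List.length_cons, Finset.sum_range_succ']
      simp only [List.cons_append, List.getD_cons_succ, List.getD_cons_zero]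
      ring

lemma ccost14_eq_sum (w : ℕ → ℕ → ℝ) (p : List ℕ) (hp : p ≠ []) :
    ccost14 w p = ∑ j ∈ Finset.range p.length,
      w (p.getD ((j+1) % p.length) 0) (p.getD (j % p.length) 0) := by
  rw [ccost14, rcost14_append_sum]
  apply Finset.sum_congr rfl
  intro j hj
  have hj' : j < p.length := Finset.mem_range.mp hj
  have h1 : j % p.length = j := Nat.mod_eq_of_lt hj'
  rw [h1]
  congr 1
  rcases Nat.lt_or_ge (j+1) p.length with h | h
  · rw [Nat.mod_eq_of_lt h, List.getD_append _ _ _ _ h]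
  · have hL : j + 1 = p.length := by omega
    rw [hL, Nat.mod_self]
    rw [List.getD_append_right _ _ _ _ (le_refl p.length)]
    simp only [Nat.sub_self, List.getD_cons_zero]
    cases p with
    | nil => exact absurd rfl hp
    | cons a t => rfl

-- new content
lemma walk_reduce (w : ℕ → ℕ → ℝ) (M : ℕ)
    (hsimple : ∀ p : List ℕ, p ≠ [] → p.Nodup →
      (∀ u ∈ p, u ∈ insert 0 (Finset.range M)) → 0 ≤ ccost14 w p) :
    ∀ (N : ℕ) (l : List ℕ), l.length ≤ N → l ≠ [] →
      (∀ u ∈ l, u ∈ insert 0 (Finset.range M)) →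
      ∃ l' : List ℕ, l'.Nodup ∧ l' ≠ [] ∧
        (∀ u ∈ l', u ∈ insert 0 (Finset.range M)) ∧
        l'.headI = l.headI ∧ rcost14 w l' ≤ rcost14 w l := by
  intro N
  induction N with
  | zero =>
    intro l hlen hne _
    exact absurd (List.length_eq_zero_iff.mp (Nat.le_zero.mp hlen)) hne
  | succ N ih =>
    intro l hlen hne hmem
    by_cases hnd : l.Nodup
    · exact ⟨l, hnd, hne, hmem, rfl, le_refl _⟩
    · rcases exists_dup_decomp l hnd with ⟨c, A, B, C, rfl⟩
      have hmem2 : ∀ u ∈ A ++ c :: C, u ∈ insert 0 (Finset.range M) := by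
        intro u hu
        apply hmem
        rcases List.mem_append.mp hu with h | h
        · simp [h]
        · rcases List.mem_cons.mp h with h' | h'
          · subst h'; simp
          · simp [h']
      have hcycle : 0 ≤ ccost14 w (c :: B) := by
        refine ccost14_nonneg w M hsimple (B.length + 1) (c :: B) (by simp) (by simp) ?_
        intro u hu
        apply hmem
        rcases List.mem_cons.mp hu with h | h
        · subst h; simp
        · simp [h]
      have hcost : rcost14 w (A ++ c :: C) ≤ rcost14 w (A ++ c :: B ++ c :: C) := by
        have e1 : A ++ c :: B ++ c :: C = A ++ c :: (B ++ c :: C) := by simp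
        rw [e1, rcost14_split w A c (B ++ c :: C)]
        have e2 : c :: (B ++ c :: C) = (c :: B) ++ c :: C := by simp
        rw [e2, rcost14_split w (c :: B) c C]
        rw [rcost14_split w A c C]
        have : ccost14 w (c :: B) = rcost14 w ((c :: B) ++ [c]) := by
          show rcost14 w ((c :: B) ++ [(c :: B).headI]) = _
          rfl
        rw [this] at hcycle
        linarith
      have hhead : (A ++ c :: C).headI = (A ++ c :: B ++ c :: C).headI := by
        cases A with
        | nil => rfl
        | cons a A' => rfl
      have hlen2 : (A ++ c :: C).length ≤ N := by
        simp only [List.length_append, List.length_cons] at hlen ⊢; omega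
      rcases ih (A ++ c :: C) hlen2 (by simp) hmem2 with ⟨l', h1, h2, h3, h4, h5⟩
      exact ⟨l', h1, h2, h3, h4.trans hhead, h5.trans hcost⟩

lemma BF14_step (w : ℕ → ℕ → ℝ) (M : ℕ) (hM : 0 < M)
    (hsimple : ∀ p : List ℕ, p ≠ [] → p.Nodup →
      (∀ u ∈ p, u ∈ insert 0 (Finset.range M)) → 0 ≤ ccost14 w p)
    (u v : ℕ) (hu : u < M) (hv : v < M) :
    BF14 w M M v ≤ BF14 w M M u + w u v := by
  have hstep : BF14 w M (M+1) v ≤ BF14 w M M u + w u v := by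
    refine le_trans (min_le_right _ _) ?_
    exact Finset.inf'_le _ (by simp [Finset.mem_insert, Finset.mem_range, hu])
  refine le_trans ?_ hstep
  -- BF M M v ≤ BF M (M+1) v
  rcases BF14_exists_walk w M (M+1) v with ⟨t, ht1, ht2, ht3⟩
  rcases walk_reduce w M hsimple (t.length + 1) (v :: t) (by simp) (by simp)
      (by
        intro z hz
        rcases List.mem_cons.mp hz with h | h
        · subst h; simp [Finset.mem_insert, Finset.mem_range, hv]
        · exact ht2 z h) with ⟨l', h1, h2, h3, h4, h5⟩
  rw [← ht3]
  cases l' with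
  | nil => exact absurd rfl h2
  | cons a t' =>
    have ha : a = v := by simpa using h4
    subst ha
    have hnodup := h1
    have hsub : (a :: t').toFinset ⊆ insert 0 (Finset.range M) := by
      intro z hz
      exact h3 z (List.mem_toFinset.mp hz)
    have hcard : (a :: t').length ≤ M := by
      have h6 : (a :: t').toFinset.card = (a :: t').length :=
        List.toFinset_card_of_nodup hnodup
      have h7 : (insert 0 (Finset.range M)).card = M := by
        rw [Finset.insert_eq_self.mpr (Finset.mem_range.mpr hM)]
        exact Finset.card_range M
      have := Finset.card_le_card hsub
      omega
    have htlen : t'.length ≤ M := by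
      simp only [List.length_cons] at hcard; omega
    refine le_trans (BF14_le_rcost w M M t' a ?_ htlen) h5
    intro z hz
    exact h3 z (by simp [hz])


/-- arithmetic structure of a fully loaded segment -/
lemma lemA14 (r Max K a b : ℕ) (h1 : 0 < r) (h2 : r < Max)
    (hsum : r * a + Max * b = K * Max + r) (hcard : a + b ≤ K + 1) :
    a = 1 ∧ b = K := by
  have hbK : b ≤ K := by nlinarith
  have ha1 : 1 ≤ a := by
    rcases Nat.eq_zero_or_pos a with h | h
    · subst h; nlinarith
    · exact h
  have hKb : b = K := by nlinarith
  subst hKb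
  constructor
  · nlinarith
  · rfl

set_option maxHeartbeats 4000000 in
theorem stmt_14 {n : ℕ} (s e : Fin n → ℝ) (hse : ∀ i, s i < e i)
    (W : ℕ) (hW : 1 ≤ W) (rmax : Fin n → ℕ) (hrmax : ∀ i, rmax i ≤ W)
    (p : Fin n → ℝ) (hp : ∀ i, 1 ≤ p i)
    (Max : ℕ) (hMax1 : 1 ≤ Max) (hMaxW : Max ≤ W)
    (hup : ∀ i, p i = 1) (hur : ∀ i, rmax i = Max)
    (r : ℕ) (hr : r = W % Max) (hrpos : 0 < r)
    (k : ℕ) (hk : k = ⌈(W : ℝ) / (Max : ℝ)⌉₊)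
    (x : Fin n → ℕ) (hx : IsAlloc W s e rmax x)
    (hxmax : ∀ y : Fin n → ℕ, IsAlloc W s e rmax y →
      allocProfit p y ≤ allocProfit p x)
    (hvals : ∀ i, x i = 0 ∨ x i = r ∨ x i = Max)
    (hload : ∀ t : ℝ,
      (Finset.univ.filter (fun i => 0 < x i ∧ s i ≤ t ∧ t < e i)).card ≤ k) :
    (r : ℝ) * (Finset.univ.filter (fun i => x i = r)).card ≤
      ((r : ℝ) / Max) / ((k : ℝ) - 1 + (r : ℝ) / Max) * (∑ i, (x i : ℝ)) := by
  classical
  -- basic numerology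
  have hMaxpos : 0 < Max := hMax1
  have hrMax : r < Max := by rw [hr]; exact Nat.mod_lt W hMaxpos
  set K := W / Max with hKdef
  have hKpos : 1 ≤ K := (Nat.one_le_div_iff hMaxpos).mpr hMaxW
  have hWeq : W = K * Max + r := by
    have h := Nat.div_add_mod W Max
    have h2 : Max * K = K * Max := Nat.mul_comm _ _
    rw [hr, hKdef]
    rw [hKdef] at h2
    omega
  have hkK : k = K + 1 := by
    rw [hk]
    rw [Nat.ceil_eq_iff (by omega : K + 1 ≠ 0)]
    constructor
    · push_cast
      rw [lt_div_iff₀ (by positivity : (0:ℝ) < Max)]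
      have : ((K * Max : ℕ) : ℝ) < W := by
        have hr0 : (0:ℝ) < r := by exact_mod_cast hrpos
        rw [hWeq]; push_cast; nlinarith
      push_cast at this ⊢
      simpa [mul_comm] using this
    · rw [div_le_iff₀ (by positivity : (0:ℝ) < Max)]
      have : (W:ℝ) ≤ ((K+1) * Max : ℕ) := by
        have : W ≤ (K+1) * Max := by rw [hWeq]; nlinarith
        exact_mod_cast this
      push_cast at this ⊢
      linarith
  -- trivial case n = 0
  rcases Nat.eq_zero_or_pos n with hn | hn
  · subst hn
    simp
  -- the sorted list of endpoints
  set V : Finset ℝ := (Finset.univ.image s) ∪ (Finset.univ.image e) with hV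
  set pts : List ℝ := V.sort (· ≤ ·) with hpts
  set M := pts.length with hM
  set val : ℕ → ℝ := fun q => pts.getD q 0 with hval
  set idx : ℝ → ℕ := fun v => pts.idxOf v with hidx
  have hsorted : List.Pairwise (· < ·) pts := V.sortedLT_sort.pairwise
  have hs_mem : ∀ i, s i ∈ pts := by
    intro i
    rw [hpts, Finset.mem_sort]
    exact Finset.mem_union_left _ (Finset.mem_image_of_mem s (Finset.mem_univ i))
  have he_mem : ∀ i, e i ∈ pts := by
    intro i
    rw [hpts, Finset.mem_sort]
    exact Finset.mem_union_right _ (Finset.mem_image_of_mem e (Finset.mem_univ i))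
  have hMpos : 0 < M := by
    rcases Fin.pos_iff_nonempty.mp hn with ⟨i⟩
    exact List.length_pos_iff.mpr (List.ne_nil_of_mem (hs_mem i))
  have val_lt : ∀ {a b : ℕ}, a < b → b < M → val a < val b := by
    intro a b hab hbM
    have haM : a < pts.length := lt_trans hab hbM
    have hbM' : b < pts.length := hbM
    have h := List.pairwise_iff_getElem.mp hsorted a b haM hbM' hab
    show pts.getD a 0 < pts.getD b 0
    rwa [List.getD_eq_getElem _ _ haM, List.getD_eq_getElem _ _ hbM']
  have val_le : ∀ {a b : ℕ}, a ≤ b → b < M → val a ≤ val b := by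
    intro a b hab hbM
    rcases Nat.lt_or_ge a b with h | h
    · exact le_of_lt (val_lt h hbM)
    · have : a = b := le_antisymm hab h
      rw [this]
  have idx_lt : ∀ v ∈ pts, idx v < M := by
    intro v hv; exact List.idxOf_lt_length_iff.mpr hv
  have val_idx : ∀ v ∈ pts, val (idx v) = v := by
    intro v hv
    show pts.getD (pts.idxOf v) 0 = v
    rw [List.getD_eq_getElem _ _ (List.idxOf_lt_length_iff.mpr hv)]
    exact List.getElem_idxOf _
  -- indices of endpoints
  set σ : Fin n → ℕ := fun i => idx (s i) with hσ
  set ε : Fin n → ℕ := fun i => idx (e i) with hε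
  have hσlt : ∀ i, σ i < M := fun i => idx_lt _ (hs_mem i)
  have hεlt : ∀ i, ε i < M := fun i => idx_lt _ (he_mem i)
  have hvalσ : ∀ i, val (σ i) = s i := fun i => val_idx _ (hs_mem i)
  have hvalε : ∀ i, val (ε i) = e i := fun i => val_idx _ (he_mem i)
  have hσε : ∀ i, σ i < ε i := by
    intro i
    by_contra h
    push_neg at h
    have := val_le h (hσlt i)
    rw [hvalσ, hvalε] at this
    exact absurd this (not_le.mpr (hse i))
  have le_reflect : ∀ {a b : ℕ}, a < M → b < M → val a ≤ val b → a ≤ b := by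
    intro a b haM hbM hv
    by_contra h
    push_neg at h
    exact absurd (val_lt h haM) (not_lt.mpr hv)
  have act_iff : ∀ q, q < M → ∀ i, ((s i ≤ val q ∧ val q < e i) ↔ (σ i ≤ q ∧ q < ε i)) := by
    intro q hq i
    constructor
    · rintro ⟨h1, h2⟩
      constructor
      · exact le_reflect (hσlt i) hq (by rwa [hvalσ])
      · by_contra h
        push_neg at h
        have := val_le h hq
        rw [hvalε] at this
        linarith
    · rintro ⟨h1, h2⟩
      constructor
      · rw [← hvalσ i]; exact val_le h1 hq
      · calc val q < val (ε i) := val_lt h2 (hεlt i)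
          _ = e i := hvalε i
  -- segment loads
  set Ld : ℕ → ℕ := fun q => ∑ i ∈ Finset.univ.filter (fun i => s i ≤ val q ∧ val q < e i), x i
    with hLd
  have hLdW : ∀ q, Ld q ≤ W := fun q => hx.2 (val q)
  -- finding the segment of a point
  have hfind : ∀ (t : ℝ) (i0 : Fin n), s i0 ≤ t → t < e i0 →
      ∃ q, q + 1 < M ∧ val q ≤ t ∧ t < val (q + 1) := by
    intro t i0 h1 h2
    set T : Finset ℕ := (Finset.range M).filter (fun q0 => val q0 ≤ t) with hT
    have hTne : T.Nonempty := by
      refine ⟨σ i0, ?_⟩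
      rw [hT, Finset.mem_filter, Finset.mem_range]
      exact ⟨hσlt i0, by rwa [hvalσ]⟩
    set q := T.max' hTne with hq
    have hqmem : q ∈ (Finset.range M).filter (fun q0 => val q0 ≤ t) := T.max'_mem hTne
    rw [Finset.mem_filter, Finset.mem_range] at hqmem
    have hqM : q < M := hqmem.1
    have hqt : val q ≤ t := hqmem.2
    have hqε : q < ε i0 := by
      by_contra h
      push_neg at h
      have := val_le h hqM
      rw [hvalε] at this
      linarith
    have hq1M : q + 1 < M := lt_of_le_of_lt hqε (hεlt i0)
    refine ⟨q, hq1M, hqt, ?_⟩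
    by_contra h
    push_neg at h
    have : q + 1 ∈ T := by
      rw [hT, Finset.mem_filter, Finset.mem_range]
      exact ⟨hq1M, h⟩
    have := T.le_max' _ this
    omega
  -- the weight function
  set w : ℕ → ℕ → ℝ := fun u v =>
    if ∃ i : Fin n, x i < Max ∧ u = σ i ∧ v = ε i then -1
    else if (v = u + 1 ∧ u + 1 < M) ∨ (u = v + 1 ∧ v + 1 < M ∧ Ld v < W) then 0
    else if ∃ i : Fin n, 0 < x i ∧ u = ε i ∧ v = σ i then 1
    else (M : ℝ) + 1 with hw
  -- no negative simple cycle
  have hsimple : ∀ p0 : List ℕ, p0 ≠ [] → p0.Nodup →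
      (∀ u ∈ p0, u ∈ insert 0 (Finset.range M)) → 0 ≤ ccost14 w p0 := by
    intro p0 hne hnodup hmem
    by_contra hneg
    push_neg at hneg
    have hp0lt : ∀ u ∈ p0, u < M := by
      intro u hu
      rcases Finset.mem_insert.mp (hmem u hu) with h | h
      · omega
      · exact Finset.mem_range.mp h
    set L := p0.length with hLdef
    have hLpos : 0 < L := List.length_pos_iff.mpr hne
    set c : ℕ → ℕ := fun j => p0.getD (j % L) 0 with hc
    have hcp : ∀ j, c j ∈ p0 := by
      intro j
      have hjl : j % L < L := Nat.mod_lt _ hLpos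
      show p0.getD (j % L) 0 ∈ p0
      rw [List.getD_eq_getElem _ _ hjl]
      exact List.getElem_mem _
    have hclt : ∀ j, c j < M := fun j => hp0lt _ (hcp j)
    have hcL : c L = c 0 := by
      show p0.getD (L % L) 0 = p0.getD (0 % L) 0
      rw [Nat.mod_self, Nat.zero_mod]
    have hcinj : ∀ j1 j2, j1 < L → j2 < L → c j1 = c j2 → j1 = j2 := by
      intro j1 j2 h1 h2 hcc
      have e1 : c j1 = p0[j1] := by
        show p0.getD (j1 % L) 0 = _
        rw [Nat.mod_eq_of_lt h1, List.getD_eq_getElem _ _ h1]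
      have e2 : c j2 = p0[j2] := by
        show p0.getD (j2 % L) 0 = _
        rw [Nat.mod_eq_of_lt h2, List.getD_eq_getElem _ _ h2]
      rw [e1, e2] at hcc
      exact (hnodup.getElem_inj_iff).mp hcc
    have hcshift : ∀ j, c (j + 1) = c ((j + 1) % L) := by
      intro j
      show p0.getD ((j+1) % L) 0 = p0.getD ((j+1) % L % L) 0
      rw [Nat.mod_mod_of_dvd _ dvd_rfl]
    have hcinj1 : ∀ j1 j2, j1 < L → j2 < L → c (j1 + 1) = c (j2 + 1) → j1 = j2 := by
      intro j1 j2 h1 h2 hcc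
      rw [hcshift j1, hcshift j2] at hcc
      have hmm := hcinj _ _ (Nat.mod_lt _ hLpos) (Nat.mod_lt _ hLpos) hcc
      rcases Nat.lt_or_ge (j1+1) L with ha | ha <;> rcases Nat.lt_or_ge (j2+1) L with hb | hb
      · rw [Nat.mod_eq_of_lt ha, Nat.mod_eq_of_lt hb] at hmm
        omega
      · have hb' : j2 + 1 = L := by omega
        rw [Nat.mod_eq_of_lt ha, hb', Nat.mod_self] at hmm
        omega
      · have ha' : j1 + 1 = L := by omega
        rw [Nat.mod_eq_of_lt hb, ha', Nat.mod_self] at hmm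
        omega
      · omega
    have hcost : ccost14 w p0 = ∑ j ∈ Finset.range L, w (c (j+1)) (c j) :=
      ccost14_eq_sum w p0 hne
    have hwlb : ∀ u v, (-1 : ℝ) ≤ w u v := by
      intro u v
      simp only [hw]
      have hM0 : (0:ℝ) ≤ (M:ℝ) := Nat.cast_nonneg M
      split_ifs <;> linarith
    have hLM : L ≤ M := by
      have h6 : p0.toFinset.card = L := List.toFinset_card_of_nodup hnodup
      have h7 : p0.toFinset ⊆ Finset.range M := by
        intro u hu
        exact Finset.mem_range.mpr (hp0lt u (List.mem_toFinset.mp hu))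
      have := Finset.card_le_card h7
      rw [h6, Finset.card_range] at this
      exact this
    have hnoBIG : ∀ j ∈ Finset.range L, w (c (j+1)) (c j) ≠ (M:ℝ) + 1 := by
      intro j hj hbig
      have h8 : ∀ j' ∈ (Finset.range L).erase j, (-1:ℝ) ≤ w (c (j'+1)) (c j') :=
        fun j' _ => hwlb _ _
      have h9 : ((Finset.range L).erase j).card • (-1:ℝ)
          ≤ ∑ j' ∈ (Finset.range L).erase j, w (c (j'+1)) (c j') := by
        rw [← Finset.sum_const]
        exact Finset.sum_le_sum h8
      have h10 : ((Finset.range L).erase j).card = L - 1 := by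
        rw [Finset.card_erase_of_mem hj, Finset.card_range]
      have h11 : ∑ j' ∈ Finset.range L, w (c (j'+1)) (c j')
          = w (c (j+1)) (c j) + ∑ j' ∈ (Finset.range L).erase j, w (c (j'+1)) (c j') :=
        (Finset.add_sum_erase _ _ hj).symm
      rw [hcost, h11, hbig] at hneg
      rw [h10] at h9
      have h12 : ((L:ℝ) - 1) * (-1) ≤ ∑ j' ∈ (Finset.range L).erase j, w (c (j'+1)) (c j') := by
        have : ((L - 1 : ℕ):ℝ) = (L:ℝ) - 1 := by
          have : 1 ≤ L := hLpos
          push_cast [Nat.cast_sub this]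
          ring
        rw [nsmul_eq_mul, this] at h9
        exact h9
      have hLMr : (L:ℝ) ≤ (M:ℝ) := Nat.cast_le.mpr hLM
      linarith
    have hclass : ∀ j ∈ Finset.range L,
        (w (c (j+1)) (c j) = -1 ∧ ∃ i, x i < Max ∧ c (j+1) = σ i ∧ c j = ε i)
        ∨ (w (c (j+1)) (c j) = 0 ∧ ((c j = c (j+1) + 1 ∧ c (j+1) + 1 < M)
            ∨ (c (j+1) = c j + 1 ∧ c j + 1 < M ∧ Ld (c j) < W)))
        ∨ (w (c (j+1)) (c j) = 1 ∧ ∃ i, 0 < x i ∧ c (j+1) = ε i ∧ c j = σ i) := by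
      intro j hj
      have hnb := hnoBIG j hj
      simp only [hw] at hnb ⊢
      split_ifs at hnb ⊢ with h1 h2 h3
      · exact Or.inl ⟨rfl, h1⟩
      · exact Or.inr (Or.inl ⟨rfl, h2⟩)
      · exact Or.inr (Or.inr ⟨rfl, h3⟩)
      · exact absurd rfl hnb
    -- the per-arc change vectors
    set δ : ℕ → Fin n → ℤ := fun j =>
      if h : (∃ i, x i < Max ∧ c (j+1) = σ i ∧ c j = ε i) ∧ w (c (j+1)) (c j) = -1 then
        Pi.single h.1.choose 1
      else if h : (∃ i, 0 < x i ∧ c (j+1) = ε i ∧ c j = σ i) ∧ w (c (j+1)) (c j) = 1 then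
        Pi.single h.1.choose (-1)
      else 0 with hδ
    have hδsum : ∀ j ∈ Finset.range L, ((∑ i, δ j i : ℤ) : ℝ) = - w (c (j+1)) (c j) := by
      intro j hj
      rcases hclass j hj with ⟨hwv, hex⟩ | ⟨hwv, _⟩ | ⟨hwv, hex⟩
      · have hcond : (∃ i, x i < Max ∧ c (j+1) = σ i ∧ c j = ε i)
            ∧ w (c (j+1)) (c j) = -1 := ⟨hex, hwv⟩
        simp only [hδ]
        rw [dif_pos hcond, Finset.sum_pi_single']
        rw [if_pos (Finset.mem_univ _), hwv]
        norm_num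
      · have hn1 : ¬ ((∃ i, x i < Max ∧ c (j+1) = σ i ∧ c j = ε i)
            ∧ w (c (j+1)) (c j) = -1) := by
          rintro ⟨_, h'⟩; rw [hwv] at h'; norm_num at h'
        have hn2 : ¬ ((∃ i, 0 < x i ∧ c (j+1) = ε i ∧ c j = σ i)
            ∧ w (c (j+1)) (c j) = 1) := by
          rintro ⟨_, h'⟩; rw [hwv] at h'; norm_num at h'
        simp only [hδ]
        rw [dif_neg hn1, dif_neg hn2, hwv]
        simp
      · have hn1 : ¬ ((∃ i, x i < Max ∧ c (j+1) = σ i ∧ c j = ε i)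
            ∧ w (c (j+1)) (c j) = -1) := by
          rintro ⟨_, h'⟩; rw [hwv] at h'; norm_num at h'
        have hcond : (∃ i, 0 < x i ∧ c (j+1) = ε i ∧ c j = σ i)
            ∧ w (c (j+1)) (c j) = 1 := ⟨hex, hwv⟩
        simp only [hδ]
        rw [dif_neg hn1, dif_pos hcond, Finset.sum_pi_single']
        rw [if_pos (Finset.mem_univ _), hwv]
        norm_num
    have hδval : ∀ j (i : Fin n), δ j i = 1 ∨ δ j i = 0 ∨ δ j i = -1 := by
      intro j i
      simp only [hδ]
      split_ifs with h1 h2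
      · rw [Pi.single_apply]
        split_ifs <;> omega
      · rw [Pi.single_apply]
        split_ifs <;> omega
      · right; left; rfl
    have hfwd_mem : ∀ j (i : Fin n), δ j i = 1 →
        c (j+1) = σ i ∧ c j = ε i ∧ x i < Max := by
      intro j i hji
      simp only [hδ] at hji
      by_cases h1 : (∃ i, x i < Max ∧ c (j+1) = σ i ∧ c j = ε i) ∧ w (c (j+1)) (c j) = -1
      · rw [dif_pos h1, Pi.single_apply] at hji
        by_cases hieq : i = h1.1.choose
        · rcases h1.1.choose_spec with ⟨ha, hb, hc2⟩
          rw [hieq]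
          exact ⟨hb, hc2, ha⟩
        · rw [if_neg hieq] at hji
          norm_num at hji
      · rw [dif_neg h1] at hji
        by_cases h2 : (∃ i, 0 < x i ∧ c (j+1) = ε i ∧ c j = σ i) ∧ w (c (j+1)) (c j) = 1
        · rw [dif_pos h2, Pi.single_apply] at hji
          by_cases hieq : i = h2.1.choose
          · rw [if_pos hieq] at hji
            norm_num at hji
          · rw [if_neg hieq] at hji
            norm_num at hji
        · rw [dif_neg h2] at hji
          norm_num at hji
    have hbwd_mem : ∀ j (i : Fin n), δ j i = -1 →
        c (j+1) = ε i ∧ c j = σ i ∧ 0 < x i := by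
      intro j i hji
      simp only [hδ] at hji
      by_cases h1 : (∃ i, x i < Max ∧ c (j+1) = σ i ∧ c j = ε i) ∧ w (c (j+1)) (c j) = -1
      · rw [dif_pos h1, Pi.single_apply] at hji
        by_cases hieq : i = h1.1.choose
        · rw [if_pos hieq] at hji
          norm_num at hji
        · rw [if_neg hieq] at hji
          norm_num at hji
      · rw [dif_neg h1] at hji
        by_cases h2 : (∃ i, 0 < x i ∧ c (j+1) = ε i ∧ c j = σ i) ∧ w (c (j+1)) (c j) = 1
        · rw [dif_pos h2, Pi.single_apply] at hji
          by_cases hieq : i = h2.1.choose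
          · rcases h2.1.choose_spec with ⟨ha, hb, hc2⟩
            rw [hieq]
            exact ⟨hb, hc2, ha⟩
          · rw [if_neg hieq] at hji
            norm_num at hji
        · rw [dif_neg h2] at hji
          norm_num at hji
    set Δ : Fin n → ℤ := fun i => ∑ j ∈ Finset.range L, δ j i with hΔ
    have hFp1 : ∀ i : Fin n, ((Finset.range L).filter (fun j => δ j i = 1)).card ≤ 1 := by
      intro i
      rw [Finset.card_le_one]
      intro a ha b hb
      rw [Finset.mem_filter, Finset.mem_range] at ha hb
      have h1 := (hfwd_mem a i ha.2).1
      have h2 := (hfwd_mem b i hb.2).1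
      exact hcinj1 a b ha.1 hb.1 (h1.trans h2.symm)
    have hFm1 : ∀ i : Fin n, ((Finset.range L).filter (fun j => δ j i = -1)).card ≤ 1 := by
      intro i
      rw [Finset.card_le_one]
      intro a ha b hb
      rw [Finset.mem_filter, Finset.mem_range] at ha hb
      have h1 := (hbwd_mem a i ha.2).1
      have h2 := (hbwd_mem b i hb.2).1
      exact hcinj1 a b ha.1 hb.1 (h1.trans h2.symm)
    have hΔeq : ∀ i : Fin n, Δ i
        = ((Finset.range L).filter (fun j => δ j i = 1)).card
          - ((Finset.range L).filter (fun j => δ j i = -1)).card := by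
      intro i
      rw [hΔ]
      simp only
      rw [← Finset.sum_filter_add_sum_filter_not (Finset.range L) (fun j => δ j i = 1)]
      have e1 : ∑ j ∈ (Finset.range L).filter (fun j => δ j i = 1), δ j i
          = ((Finset.range L).filter (fun j => δ j i = 1)).card := by
        rw [Finset.sum_congr rfl (fun j hj => (Finset.mem_filter.mp hj).2),
          Finset.sum_const, nsmul_eq_mul, mul_one]
      have e2 : ∑ j ∈ ((Finset.range L).filter (fun j => ¬ δ j i = 1)), δ j i
          = - ((Finset.range L).filter (fun j => δ j i = -1)).card := by
        rw [← Finset.sum_filter_add_sum_filter_not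
          ((Finset.range L).filter (fun j => ¬ δ j i = 1)) (fun j => δ j i = -1)]
        have e3 : ∑ j ∈ ((Finset.range L).filter (fun j => ¬ δ j i = 1)).filter
            (fun j => δ j i = -1), δ j i
            = - (((Finset.range L).filter (fun j => ¬ δ j i = 1)).filter
                (fun j => δ j i = -1)).card := by
          rw [Finset.sum_congr rfl (fun j hj => (Finset.mem_filter.mp hj).2),
            Finset.sum_const, nsmul_eq_mul, mul_neg_one]
        have e4 : ∑ j ∈ ((Finset.range L).filter (fun j => ¬ δ j i = 1)).filter
            (fun j => ¬ δ j i = -1), δ j i = 0 := by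
          apply Finset.sum_eq_zero
          intro j hj
          rw [Finset.mem_filter] at hj
          have h5 := (Finset.mem_filter.mp hj.1).2
          rcases hδval j i with h | h | h
          · exact absurd h h5
          · exact h
          · exact absurd h hj.2
        have e5 : ((Finset.range L).filter (fun j => ¬ δ j i = 1)).filter (fun j => δ j i = -1)
            = (Finset.range L).filter (fun j => δ j i = -1) := by
          rw [Finset.filter_filter]
          apply Finset.filter_congr
          intro j _
          constructor
          · rintro ⟨_, h⟩; exact h
          · intro h; exact ⟨by omega, h⟩
        rw [e3, e4, e5, add_zero]
      rw [e1, e2]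
      push_cast
      ring
    have hΔrange : ∀ i : Fin n, -1 ≤ Δ i ∧ Δ i ≤ 1 := by
      intro i
      have := hFp1 i
      have := hFm1 i
      rw [hΔeq i]
      omega
    have hΔup : ∀ i : Fin n, Δ i = 1 → x i < Max := by
      intro i hi
      rw [hΔeq i] at hi
      have h1 := hFp1 i
      have h2 : 0 < ((Finset.range L).filter (fun j => δ j i = 1)).card := by omega
      rcases Finset.card_pos.mp h2 with ⟨j, hj⟩
      exact (hfwd_mem j i (Finset.mem_filter.mp hj).2).2.2
    have hΔdown : ∀ i : Fin n, Δ i = -1 → 0 < x i := by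
      intro i hi
      rw [hΔeq i] at hi
      have h1 := hFm1 i
      have h2 : 0 < ((Finset.range L).filter (fun j => δ j i = -1)).card := by omega
      rcases Finset.card_pos.mp h2 with ⟨j, hj⟩
      exact (hbwd_mem j i (Finset.mem_filter.mp hj).2).2.2
    -- the improved allocation
    set y : Fin n → ℕ := fun i => (x i + Δ i).toNat with hy
    have hyZ : ∀ i, (y i : ℤ) = x i + Δ i := by
      intro i
      rw [hy]
      simp only
      rw [Int.toNat_of_nonneg]
      rcases hΔrange i with ⟨h1, h2⟩
      rcases eq_or_lt_of_le h1 with h | h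
      · have := hΔdown i h.symm
        have : (1:ℤ) ≤ x i := by exact_mod_cast this
        omega
      · have : (0:ℤ) ≤ x i := Int.ofNat_nonneg _
        omega
    have hyub : ∀ i, y i ≤ rmax i := by
      intro i
      rw [hur i]
      have h0 : (y i : ℤ) ≤ Max := by
        rw [hyZ i]
        rcases hΔrange i with ⟨h1, h2⟩
        rcases eq_or_lt_of_le h2 with h | h
        · have := hΔup i h
          have : (x i : ℤ) + 1 ≤ Max := by exact_mod_cast this
          omega
        · have : (x i : ℤ) ≤ Max := by exact_mod_cast (hur i ▸ hx.1 i)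
          omega
      exact_mod_cast h0
    have hyfeas : ∀ t : ℝ,
        ∑ i ∈ Finset.univ.filter (fun i => s i ≤ t ∧ t < e i), y i ≤ W := by
      intro t
      by_cases hact : ∃ i0, s i0 ≤ t ∧ t < e i0
      swap
      · push_neg at hact
        have : Finset.univ.filter (fun i => s i ≤ t ∧ t < e i) = ∅ := by
          apply Finset.filter_eq_empty_iff.mpr
          intro i _
          intro hcon
          exact absurd hcon.2 (not_lt.mpr (hact i hcon.1))
        rw [this, Finset.sum_empty]
        omega
      rcases hact with ⟨i0, h01, h02⟩
      rcases hfind t i0 h01 h02 with ⟨q, hq1, hq2, hq3⟩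
      have hqM : q < M := by omega
      have hiff : ∀ j : Fin n, (s j ≤ t ∧ t < e j) ↔ (σ j ≤ q ∧ q < ε j) := by
        intro j
        constructor
        · rintro ⟨ha, hb⟩
          constructor
          · by_contra hcon
            push_neg at hcon
            have h5 : q + 1 ≤ σ j := hcon
            have := val_le h5 (hσlt j)
            rw [hvalσ] at this
            linarith
          · by_contra hcon
            push_neg at hcon
            have := val_le hcon hqM
            rw [hvalε] at this
            linarith
        · rintro ⟨ha, hb⟩
          constructor
          · have := val_le ha hqM
            rw [hvalσ] at this
            linarith
          · have h5 : q + 1 ≤ ε j := hb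
            have := val_le h5 (hεlt j)
            rw [hvalε] at this
            linarith
      have hFilt : Finset.univ.filter (fun i => s i ≤ t ∧ t < e i)
          = Finset.univ.filter (fun i => σ i ≤ q ∧ q < ε i) :=
        Finset.filter_congr (fun j _ => hiff j)
      have hFeq2 : Finset.univ.filter (fun i => s i ≤ val q ∧ val q < e i)
          = Finset.univ.filter (fun i => σ i ≤ q ∧ q < ε i) :=
        Finset.filter_congr (fun j _ => act_iff q hqM j)
      set Ft := Finset.univ.filter (fun i => σ i ≤ q ∧ q < ε i) with hFt
      have hLdq : Ld q = ∑ i ∈ Ft, x i := by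
        rw [hLd]
        simp only
        rw [hFeq2]
      -- the crossing bound
      set χ : ℕ → ℤ := fun m => if t < val m then 1 else 0 with hχ
      have htel : ∑ j ∈ Finset.range L, (χ (c j) - χ (c (j+1))) = 0 := by
        rw [Finset.sum_range_sub' (fun j => χ (c j)) L, hcL, sub_self]
      have hvq : ∀ v0 : ℕ, v0 + 1 < M → val v0 ≤ t → t < val (v0 + 1) → v0 = q := by
        intro v0 hv0 hv1 hv2
        by_contra hcon
        rcases Nat.lt_or_ge v0 q with h | h
        · have h5 : v0 + 1 ≤ q := by omega
          have := val_le h5 hqM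
          linarith
        · have h6 : q + 1 ≤ v0 := by omega
          have := val_le h6 (by omega : v0 < M)
          linarith
      have hactχ : ∀ i : Fin n, χ (ε i) - χ (σ i) = (if i ∈ Ft then (1:ℤ) else 0) := by
        intro i
        have hFtiff : i ∈ Ft ↔ (s i ≤ t ∧ t < e i) := by
          rw [hFt, Finset.mem_filter]
          constructor
          · rintro ⟨_, hm⟩; exact (hiff i).mpr hm
          · intro hm; exact ⟨Finset.mem_univ i, (hiff i).mp hm⟩
        rw [hχ]
        simp only
        rw [hvalε, hvalσ]
        by_cases h1 : s i ≤ t <;> by_cases h2 : t < e i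
        · rw [if_pos h2, if_neg (not_lt.mpr h1), if_pos (hFtiff.mpr ⟨h1, h2⟩)]
          norm_num
        · rw [if_neg h2, if_neg (not_lt.mpr h1),
            if_neg (fun hm => h2 (hFtiff.mp hm).2)]
          norm_num
        · push_neg at h1
          rw [if_pos h2, if_pos h1, if_neg (fun hm => (not_le.mpr h1) (hFtiff.mp hm).1)]
          norm_num
        · push_neg at h1 h2
          exfalso
          have := hse i
          linarith
      set extraj : ℕ → ℤ := fun j =>
        if c (j+1) = c j + 1 ∧ c j = q ∧ Ld q < W then 1 else 0 with hextraj
      have harc : ∀ j ∈ Finset.range L,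
          ∑ i ∈ Ft, δ j i ≤ (χ (c j) - χ (c (j+1))) + extraj j := by
        intro j hj
        have hex0 : 0 ≤ extraj j := by
          rw [hextraj]
          simp only
          split_ifs <;> omega
        rcases hclass j hj with ⟨hwv, hex⟩ | ⟨hwv, hseg⟩ | ⟨hwv, hex⟩
        · have hcond : (∃ i, x i < Max ∧ c (j+1) = σ i ∧ c j = ε i)
              ∧ w (c (j+1)) (c j) = -1 := ⟨hex, hwv⟩
          have hδj : δ j = Pi.single hcond.1.choose 1 := by
            simp only [hδ]
            rw [dif_pos hcond]
          rcases hcond.1.choose_spec with ⟨ha, hb, hc2⟩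
          have hch := hactχ hcond.1.choose
          rw [← hb, ← hc2] at hch
          rw [hδj, Finset.sum_pi_single']
          have hex0' := hex0
          rw [← hch]
          linarith
        · -- segment arc : δ j = 0
          have hn1 : ¬ ((∃ i, x i < Max ∧ c (j+1) = σ i ∧ c j = ε i)
              ∧ w (c (j+1)) (c j) = -1) := by
            rintro ⟨_, h'⟩; rw [hwv] at h'; norm_num at h'
          have hn2 : ¬ ((∃ i, 0 < x i ∧ c (j+1) = ε i ∧ c j = σ i)
              ∧ w (c (j+1)) (c j) = 1) := by
            rintro ⟨_, h'⟩; rw [hwv] at h'; norm_num at h'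
          have hδj : δ j = 0 := by
            simp only [hδ]
            rw [dif_neg hn1, dif_neg hn2]
          rw [hδj]
          simp only [Pi.zero_apply, Finset.sum_const_zero]
          rcases hseg with ⟨h5, h6⟩ | ⟨h5, h6, h7⟩
          · -- rightward ground arc
            have hle : val (c (j+1)) ≤ val (c (j+1) + 1) := val_le (by omega) h6
            rw [hχ, h5]
            simp only
            by_cases hh : t < val (c (j+1))
            · rw [if_pos (lt_of_lt_of_le hh hle), if_pos hh]
              linarith
            · rw [if_neg hh]
              by_cases hh2 : t < val (c (j+1) + 1)
              · rw [if_pos hh2]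
                linarith
              · rw [if_neg hh2]
                linarith
          · -- leftward ground arc
            rw [hχ, h5]
            simp only
            by_cases hh1 : val (c j) ≤ t
            · by_cases hh2 : t < val (c j + 1)
              · have hcq : c j = q := hvq (c j) h6 hh1 hh2
                have hextra1 : extraj j = 1 := by
                  rw [hextraj]
                  simp only
                  rw [if_pos ⟨by rw [h5], hcq, by rw [← hcq]; exact h7⟩]
                rw [hextra1, if_pos hh2, if_neg (not_lt.mpr hh1)]
                norm_num
              · rw [if_neg hh2, if_neg (not_lt.mpr hh1)]
                omega
            · push_neg at hh1
              have hh2 : t < val (c j + 1) := by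
                have := val_le (Nat.le_succ (c j)) h6
                linarith
              rw [if_pos hh2, if_pos hh1]
              omega
        · have hn1 : ¬ ((∃ i, x i < Max ∧ c (j+1) = σ i ∧ c j = ε i)
              ∧ w (c (j+1)) (c j) = -1) := by
            rintro ⟨_, h'⟩; rw [hwv] at h'; norm_num at h'
          have hcond : (∃ i, 0 < x i ∧ c (j+1) = ε i ∧ c j = σ i)
              ∧ w (c (j+1)) (c j) = 1 := ⟨hex, hwv⟩
          have hδj : δ j = Pi.single hcond.1.choose (-1) := by
            simp only [hδ]
            rw [dif_neg hn1, dif_pos hcond]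
          rcases hcond.1.choose_spec with ⟨ha, hb, hc2⟩
          have hch := hactχ hcond.1.choose
          rw [← hb, ← hc2] at hch
          rw [hδj, Finset.sum_pi_single']
          split_ifs with hh
          · rw [if_pos hh] at hch
            linarith
          · rw [if_neg hh] at hch
            linarith
      have hextrasum : ∑ j ∈ Finset.range L, extraj j ≤ (if Ld q < W then 1 else 0) := by
        by_cases hldq : Ld q < W
        · rw [if_pos hldq]
          have e6 : ∑ j ∈ Finset.range L, extraj j
              = ((Finset.range L).filter
                  (fun j => c (j+1) = c j + 1 ∧ c j = q ∧ Ld q < W)).card := by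
            rw [hextraj]
            simp only
            rw [Finset.sum_ite, Finset.sum_const_zero, add_zero, Finset.sum_const,
              nsmul_eq_mul, mul_one]
          rw [e6]
          have e7 : ((Finset.range L).filter
              (fun j => c (j+1) = c j + 1 ∧ c j = q ∧ Ld q < W)).card ≤ 1 := by
            rw [Finset.card_le_one]
            intro a ha b hb
            rw [Finset.mem_filter, Finset.mem_range] at ha hb
            apply hcinj1 a b ha.1 hb.1
            linarith [ha.2.1, hb.2.1, ha.2.2.1, hb.2.2.1]
          exact_mod_cast e7
        · rw [if_neg hldq]
          apply Finset.sum_nonpos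
          intro j _
          rw [hextraj]
          simp only
          rw [if_neg (fun hcon => hldq hcon.2.2)]
      have hsumΔ : ∑ i ∈ Ft, Δ i ≤ (if Ld q < W then 1 else 0) := by
        have e8 : ∑ i ∈ Ft, Δ i = ∑ j ∈ Finset.range L, ∑ i ∈ Ft, δ j i := by
          rw [hΔ]
          simp only
          rw [Finset.sum_comm]
        rw [e8]
        calc ∑ j ∈ Finset.range L, ∑ i ∈ Ft, δ j i
            ≤ ∑ j ∈ Finset.range L, ((χ (c j) - χ (c (j+1))) + extraj j) :=
              Finset.sum_le_sum harc
          _ = ∑ j ∈ Finset.range L, (χ (c j) - χ (c (j+1)))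
              + ∑ j ∈ Finset.range L, extraj j := Finset.sum_add_distrib
          _ = ∑ j ∈ Finset.range L, extraj j := by rw [htel, zero_add]
          _ ≤ _ := hextrasum
      -- conclude feasibility at t
      have hfinal : (∑ i ∈ Ft, (y i : ℤ)) ≤ W := by
        have e9 : ∑ i ∈ Ft, (y i : ℤ) = ∑ i ∈ Ft, ((x i : ℤ) + Δ i) :=
          Finset.sum_congr rfl (fun i _ => hyZ i)
        rw [e9, Finset.sum_add_distrib]
        have e10 : ∑ i ∈ Ft, (x i : ℤ) = (Ld q : ℤ) := by
          rw [hLdq]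
          push_cast
          rfl
        rw [e10]
        have h11 := hLdW q
        by_cases hldq : Ld q < W
        · rw [if_pos hldq] at hsumΔ
          have : (Ld q : ℤ) + 1 ≤ W := by exact_mod_cast hldq
          omega
        · rw [if_neg hldq] at hsumΔ
          have : (Ld q : ℤ) ≤ W := by exact_mod_cast h11
          omega
      rw [hFilt]
      exact_mod_cast hfinal
    -- profit strictly increases: contradiction with optimality
    have hyalloc : IsAlloc W s e rmax y := ⟨hyub, hyfeas⟩
    have hle := hxmax y hyalloc
    have hpx : allocProfit p x = ∑ i, (x i : ℝ) := by
      rw [allocProfit]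
      exact Finset.sum_congr rfl (fun i _ => by rw [hup i, one_mul])
    have hpy : allocProfit p y = ∑ i, (y i : ℝ) := by
      rw [allocProfit]
      exact Finset.sum_congr rfl (fun i _ => by rw [hup i, one_mul])
    have hyR : ∀ i, (y i : ℝ) = (x i : ℝ) + ((Δ i : ℤ) : ℝ) := by
      intro i
      have h1 := hyZ i
      have h2 : ((y i : ℤ) : ℝ) = (((x i : ℤ) + Δ i : ℤ) : ℝ) := by rw [h1]
      push_cast at h2
      exact_mod_cast h2
    have hΔsumR : ∑ i, ((Δ i : ℤ) : ℝ) = - ccost14 w p0 := by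
      have e1 : ∀ i : Fin n, ((Δ i : ℤ) : ℝ) = ∑ j ∈ Finset.range L, ((δ j i : ℤ) : ℝ) := by
        intro i
        rw [hΔ]
        push_cast
        rfl
      rw [Finset.sum_congr rfl (fun i _ => e1 i), Finset.sum_comm]
      have e2 : ∀ j ∈ Finset.range L, ∑ i, ((δ j i : ℤ) : ℝ) = - w (c (j+1)) (c j) := by
        intro j hj
        rw [← hδsum j hj]
        push_cast
        rfl
      rw [Finset.sum_congr rfl e2, hcost]
      rw [Finset.sum_neg_distrib]
    have hgain : allocProfit p y = allocProfit p x + (- ccost14 w p0) := by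
      rw [hpx, hpy, Finset.sum_congr rfl (fun i _ => hyR i), Finset.sum_add_distrib, hΔsumR]
    rw [hgain] at hle
    linarith
  -- the potential
  set π : ℕ → ℝ := BF14 w M M with hπ
  have hstep : ∀ u v, u < M → v < M → π v ≤ π u + w u v :=
    fun u v hu hv => BF14_step w M hMpos hsimple u v hu hv
  have hwval1 : ∀ i : Fin n, x i < Max → w (σ i) (ε i) = -1 := by
    intro i h
    simp only [hw]
    exact if_pos ⟨i, h, rfl, rfl⟩
  have hwval2 : ∀ i : Fin n, 0 < x i → w (ε i) (σ i) ≤ 1 := by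
    intro i h
    simp only [hw]
    split_ifs with h1 h2 h3
    · norm_num
    · norm_num
    · norm_num
    · exact absurd ⟨i, h, rfl, rfl⟩ h3
  have hwval3 : ∀ q, q + 1 < M → w q (q + 1) ≤ 0 := by
    intro q hq
    simp only [hw]
    split_ifs with h1 h2 h3
    · norm_num
    · norm_num
    · exact absurd (Or.inl ⟨trivial, hq⟩) h2
    · exact absurd (Or.inl ⟨trivial, hq⟩) h2
  have hwval4 : ∀ q, q + 1 < M → Ld q < W → w (q+1) q ≤ 0 := by
    intro q hq hld
    simp only [hw]
    split_ifs with h1 h2 h3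
    · norm_num
    · norm_num
    · exact absurd (Or.inr ⟨trivial, hq, hld⟩) h2
    · exact absurd (Or.inr ⟨trivial, hq, hld⟩) h2
  have hC1 : ∀ i : Fin n, x i < Max → π (ε i) ≤ π (σ i) - 1 := by
    intro i h
    have := hstep (σ i) (ε i) (hσlt i) (hεlt i)
    rw [hwval1 i h] at this
    linarith
  have hC2 : ∀ i : Fin n, 0 < x i → π (σ i) ≤ π (ε i) + 1 := by
    intro i h
    have := hstep (ε i) (σ i) (hεlt i) (hσlt i)
    have h2 := hwval2 i h
    linarith
  have hC3 : ∀ q, q + 1 < M → π (q+1) ≤ π q := by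
    intro q hq
    have := hstep q (q+1) (by omega) hq
    have h2 := hwval3 q hq
    linarith
  have hC4 : ∀ q, q + 1 < M → Ld q < W → π q ≤ π (q+1) := by
    intro q hq hld
    have := hstep (q+1) q hq (by omega)
    have h2 := hwval4 q hq hld
    linarith
  -- drops
  set drop : ℕ → ℝ := fun q => π q - π (q+1) with hdrop
  have tele : ∀ a b : ℕ, a ≤ b → ∑ q ∈ Finset.Ico a b, drop q = π a - π b := by
    intro a b hab
    induction b, hab using Nat.le_induction with
    | base => simp
    | succ b hab ih =>
      rw [Finset.sum_Ico_succ_top hab, ih, hdrop]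
      ring
  have hdrop_nonneg : ∀ q, q + 1 < M → 0 ≤ drop q := by
    intro q hq
    have := hC3 q hq
    rw [hdrop]
    simp only
    linarith
  have hdrop_full : ∀ q, q + 1 < M → 0 < drop q → Ld q = W := by
    intro q hq hpos
    by_contra h
    have hlt : Ld q < W := lt_of_le_of_ne (hLdW q) h
    have := hC4 q hq hlt
    rw [hdrop] at hpos
    simp only at hpos
    linarith
  -- the two groups
  set G1 : Finset (Fin n) := Finset.univ.filter (fun i => x i = r) with hG1
  set G2 : Finset (Fin n) := Finset.univ.filter (fun i => x i = Max) with hG2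
  have hG1span : ∀ i ∈ G1, π (σ i) - π (ε i) = 1 := by
    intro i hi
    rw [hG1, Finset.mem_filter] at hi
    have h1 := hC1 i (by omega)
    have h2 := hC2 i (by omega)
    linarith
  have hG2span : ∀ m ∈ G2, π (σ m) - π (ε m) ≤ 1 := by
    intro m hm
    rw [hG2, Finset.mem_filter] at hm
    have h2 := hC2 m (by omega)
    linarith
  -- full segments
  have hfull : ∀ q, q + 1 < M → Ld q = W →
      (G1.filter (fun i => σ i ≤ q ∧ q < ε i)).card = 1 ∧
      (G2.filter (fun i => σ i ≤ q ∧ q < ε i)).card = K := by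
    intro q hq1 hfc
    have hqM : q < M := by omega
    have hFeq : Finset.univ.filter (fun i => s i ≤ val q ∧ val q < e i)
        = Finset.univ.filter (fun i => σ i ≤ q ∧ q < ε i) :=
      Finset.filter_congr (fun i _ => act_iff q hqM i)
    set F := Finset.univ.filter (fun i => σ i ≤ q ∧ q < ε i) with hF
    have hLdF : Ld q = ∑ i ∈ F, x i := by rw [hLd]; simp only; rw [hFeq]
    -- decompose the sum
    have hsplit : ∑ i ∈ F, x i =
        r * (F.filter (fun i => x i = r)).card + Max * (F.filter (fun i => x i = Max)).card := by
      rw [← Finset.sum_filter_add_sum_filter_not F (fun i => x i = r)]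
      have e1 : ∑ i ∈ F.filter (fun i => x i = r), x i
          = r * (F.filter (fun i => x i = r)).card := by
        rw [Finset.sum_congr rfl (fun i hi => (Finset.mem_filter.mp hi).2)]
        rw [Finset.sum_const, smul_eq_mul, mul_comm]
      have e2 : ∑ i ∈ F.filter (fun i => ¬ x i = r), x i
          = Max * (F.filter (fun i => x i = Max)).card := by
        rw [← Finset.sum_filter_add_sum_filter_not (F.filter (fun i => ¬ x i = r))
          (fun i => x i = Max)]
        have e3 : ∑ i ∈ (F.filter (fun i => ¬ x i = r)).filter (fun i => x i = Max), x i
            = Max * ((F.filter (fun i => ¬ x i = r)).filter (fun i => x i = Max)).card := by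
          rw [Finset.sum_congr rfl (fun i hi => (Finset.mem_filter.mp hi).2)]
          rw [Finset.sum_const, smul_eq_mul, mul_comm]
        have e4 : ∑ i ∈ (F.filter (fun i => ¬ x i = r)).filter (fun i => ¬ x i = Max), x i = 0 := by
          apply Finset.sum_eq_zero
          intro i hi
          rw [Finset.mem_filter] at hi
          have h5 := (Finset.mem_filter.mp hi.1).2
          rcases hvals i with h | h | h
          · exact h
          · exact absurd h h5
          · exact absurd h hi.2
        have e5 : (F.filter (fun i => ¬ x i = r)).filter (fun i => x i = Max)
            = F.filter (fun i => x i = Max) := by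
          rw [Finset.filter_filter]
          apply Finset.filter_congr
          intro i _
          constructor
          · rintro ⟨_, h⟩; exact h
          · intro h; exact ⟨by omega, h⟩
        rw [e3, e4, e5, add_zero]
      rw [e1, e2]
    have hAeq : F.filter (fun i => x i = r) = G1.filter (fun i => σ i ≤ q ∧ q < ε i) := by
      rw [hF, hG1, Finset.filter_filter, Finset.filter_filter]
      apply Finset.filter_congr
      intro i _
      exact ⟨fun ⟨h1, h2⟩ => ⟨h2, h1⟩, fun ⟨h1, h2⟩ => ⟨h2, h1⟩⟩
    have hBeq : F.filter (fun i => x i = Max) = G2.filter (fun i => σ i ≤ q ∧ q < ε i) := by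
      rw [hF, hG2, Finset.filter_filter, Finset.filter_filter]
      apply Finset.filter_congr
      intro i _
      exact ⟨fun ⟨h1, h2⟩ => ⟨h2, h1⟩, fun ⟨h1, h2⟩ => ⟨h2, h1⟩⟩
    -- cardinality bound from hload
    have hcard : (G1.filter (fun i => σ i ≤ q ∧ q < ε i)).card
        + (G2.filter (fun i => σ i ≤ q ∧ q < ε i)).card ≤ K + 1 := by
      have h6 := hload (val q)
      rw [hkK] at h6
      have h7 : Finset.univ.filter (fun i => 0 < x i ∧ s i ≤ val q ∧ val q < e i)
          = (G1.filter (fun i => σ i ≤ q ∧ q < ε i)) ∪ (G2.filter (fun i => σ i ≤ q ∧ q < ε i)) := by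
        ext i
        simp only [Finset.mem_filter, Finset.mem_union, Finset.mem_univ, true_and, hG1, hG2]
        constructor
        · rintro ⟨h8, h9⟩
          have h10 := (act_iff q hqM i).mp h9
          rcases hvals i with h | h | h
          · omega
          · exact Or.inl ⟨h, h10⟩
          · exact Or.inr ⟨h, h10⟩
        · rintro (⟨h8, h9⟩ | ⟨h8, h9⟩) <;>
            exact ⟨by omega, (act_iff q hqM i).mpr h9⟩
      rw [h7] at h6
      have hdisj : Disjoint (G1.filter (fun i => σ i ≤ q ∧ q < ε i))
          (G2.filter (fun i => σ i ≤ q ∧ q < ε i)) := by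
        rw [Finset.disjoint_left]
        intro i hi1 hi2
        rw [Finset.mem_filter, hG1, Finset.mem_filter] at hi1
        rw [Finset.mem_filter, hG2, Finset.mem_filter] at hi2
        omega
      rw [Finset.card_union_of_disjoint hdisj] at h6
      exact h6
    have hWsum : r * (G1.filter (fun i => σ i ≤ q ∧ q < ε i)).card
        + Max * (G2.filter (fun i => σ i ≤ q ∧ q < ε i)).card = K * Max + r := by
      rw [← hAeq, ← hBeq, ← hsplit, ← hLdF, hfc, hWeq]
    exact lemA14 r Max K _ _ hrpos hrMax hWsum hcard
  -- counting
  have hIco : ∀ i : Fin n, Finset.Ico (σ i) (ε i)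
      = (Finset.range (M-1)).filter (fun q => σ i ≤ q ∧ q < ε i) := by
    intro i
    ext q
    rw [Finset.mem_Ico, Finset.mem_filter, Finset.mem_range]
    have := hεlt i
    omega
  have hswapG : ∀ G : Finset (Fin n),
      ∑ i ∈ G, (π (σ i) - π (ε i))
      = ∑ q ∈ Finset.range (M-1),
          ((G.filter (fun i => σ i ≤ q ∧ q < ε i)).card : ℝ) * drop q := by
    intro G
    have e1 : ∀ i ∈ G, π (σ i) - π (ε i) = ∑ q ∈ Finset.Ico (σ i) (ε i), drop q :=
      fun i _ => (tele (σ i) (ε i) (le_of_lt (hσε i))).symm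
    rw [Finset.sum_congr rfl e1]
    have e2 : ∀ i ∈ G, ∑ q ∈ Finset.Ico (σ i) (ε i), drop q
        = ∑ q ∈ Finset.range (M-1), if σ i ≤ q ∧ q < ε i then drop q else 0 := by
      intro i _
      rw [hIco i, Finset.sum_filter]
    rw [Finset.sum_congr rfl e2, Finset.sum_comm]
    apply Finset.sum_congr rfl
    intro q _
    rw [Finset.sum_ite, Finset.sum_const_zero, add_zero, Finset.sum_const, nsmul_eq_mul]
  have hKg : (K : ℝ) * (G1.card : ℝ) ≤ (G2.card : ℝ) := by
    have hg1 : (G1.card : ℝ) = ∑ i ∈ G1, (π (σ i) - π (ε i)) := by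
      rw [Finset.sum_congr rfl hG1span, Finset.sum_const, nsmul_eq_mul, mul_one]
    have hg2 : ∑ m ∈ G2, (π (σ m) - π (ε m)) ≤ (G2.card : ℝ) := by
      calc ∑ m ∈ G2, (π (σ m) - π (ε m)) ≤ ∑ m ∈ G2, 1 := Finset.sum_le_sum hG2span
        _ = G2.card := by rw [Finset.sum_const, nsmul_eq_mul, mul_one]
    have hperq : ∀ q ∈ Finset.range (M-1),
        (K : ℝ) * (((G1.filter (fun i => σ i ≤ q ∧ q < ε i)).card : ℝ) * drop q)
        ≤ ((G2.filter (fun i => σ i ≤ q ∧ q < ε i)).card : ℝ) * drop q := by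
      intro q hqr
      have hq1 : q + 1 < M := by
        rw [Finset.mem_range] at hqr; omega
      rcases eq_or_lt_of_le (hdrop_nonneg q hq1) with h | h
      · rw [← h]; simp
      · rcases hfull q hq1 (hdrop_full q hq1 h) with ⟨hA, hB⟩
        rw [hA, hB]
        simp
    calc (K : ℝ) * (G1.card : ℝ)
        = ∑ q ∈ Finset.range (M-1),
            (K : ℝ) * (((G1.filter (fun i => σ i ≤ q ∧ q < ε i)).card : ℝ) * drop q) := by
          rw [hg1, hswapG G1, Finset.mul_sum]
      _ ≤ ∑ q ∈ Finset.range (M-1),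
            ((G2.filter (fun i => σ i ≤ q ∧ q < ε i)).card : ℝ) * drop q :=
          Finset.sum_le_sum hperq
      _ = ∑ m ∈ G2, (π (σ m) - π (ε m)) := (hswapG G2).symm
      _ ≤ (G2.card : ℝ) := hg2
  -- total sum
  have hsum : (∑ i, (x i : ℝ)) = (r : ℝ) * G1.card + (Max : ℝ) * G2.card := by
    rw [← Finset.sum_filter_add_sum_filter_not Finset.univ (fun i => x i = r)]
    have e1 : ∑ i ∈ Finset.univ.filter (fun i => x i = r), (x i : ℝ) = (r : ℝ) * G1.card := by
      rw [Finset.sum_congr rfl (fun i hi => by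
        rw [(Finset.mem_filter.mp hi).2] : ∀ i ∈ Finset.univ.filter (fun i => x i = r),
          (x i : ℝ) = (r:ℝ))]
      rw [Finset.sum_const, nsmul_eq_mul, mul_comm, hG1]
    have e2 : ∑ i ∈ Finset.univ.filter (fun i => ¬ x i = r), (x i : ℝ)
        = (Max : ℝ) * G2.card := by
      rw [← Finset.sum_filter_add_sum_filter_not (Finset.univ.filter (fun i => ¬ x i = r))
        (fun i => x i = Max)]
      have e3 : ∑ i ∈ (Finset.univ.filter (fun i => ¬ x i = r)).filter (fun i => ¬ x i = Max),
          (x i : ℝ) = 0 := by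
        apply Finset.sum_eq_zero
        intro i hi
        rw [Finset.mem_filter] at hi
        have h5 := (Finset.mem_filter.mp hi.1).2
        rcases hvals i with h | h | h
        · rw [h]; norm_num
        · exact absurd h h5
        · exact absurd h hi.2
      have e5 : (Finset.univ.filter (fun i => ¬ x i = r)).filter (fun i => x i = Max) = G2 := by
        rw [Finset.filter_filter, hG2]
        apply Finset.filter_congr
        intro i _
        constructor
        · rintro ⟨_, h⟩; exact h
        · intro h; exact ⟨by omega, h⟩
      have e4 : ∑ i ∈ (Finset.univ.filter (fun i => ¬ x i = r)).filter (fun i => x i = Max),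
          (x i : ℝ) = (Max : ℝ) * G2.card := by
        rw [e5]
        have : ∀ i ∈ G2, (x i : ℝ) = (Max:ℝ) := by
          intro i hi
          have h9 : x i = Max := (Finset.mem_filter.mp hi).2
          rw [h9]
        rw [Finset.sum_congr rfl this, Finset.sum_const, nsmul_eq_mul, mul_comm]
      rw [e3, e4, add_zero]
    rw [e1, e2]
  -- final algebra
  have hkR : (k : ℝ) - 1 = (K : ℝ) := by rw [hkK]; push_cast; ring
  rw [hkR, hsum]
  set lam : ℝ := (r : ℝ) / Max with hlam
  have hlam_pos : 0 < lam := by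
    rw [hlam]
    apply div_pos
    · exact_mod_cast hrpos
    · exact_mod_cast hMaxpos
  have hD : 0 < (K : ℝ) + lam := by positivity
  have hlm : lam * (Max:ℝ) = r := div_mul_cancel₀ _ (by positivity : ((Max:ℝ) ≠ 0))
  have h5 : (r:ℝ) * ((K:ℝ) * G1.card) ≤ (r:ℝ) * G2.card :=
    mul_le_mul_of_nonneg_left hKg (by positivity)
  have h6 : lam * (Max:ℝ) * (G2.card:ℝ) = (r:ℝ) * G2.card := by rw [hlm]
  rw [div_mul_eq_mul_div, le_div_iff₀ hD]
  nlinarith [h5, h6]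

end StmtAux14
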